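/- arXiv:math/9802068 — 3 statements merged into one kernel-verified Lean document; each statement's English description precedes it below -/
import Mathlib

section
/- Suppose ∫_{Q_p} exp(2πi({t₀x}_p - r)) μ(dx) = 1 for a probability measure μ on Q_p, t₀ ∈ Q_p, and r ∈ [0,1). Then either r = 0 or r is a rational number of the form p^{-n}(a₀ + a₁p + ⋯ + a_{n-1}p^{n-1}) with n ≥ 1, a_j ∈ {0,...,p-1}, a₀ ≠ 0; in either case there exists ξ ∈ Q_p with r = {t₀ξ}_p. -/
open MeasureTheory Metric Filter Topology
open scoped ENNReal NNReal

noncomputable section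

variable {p : ℕ} [Fact p.Prime]

instance : MeasurableSpace ℚ_[p] := borel _
instance : BorelSpace ℚ_[p] := ⟨rfl⟩

/-- The `p`-adic fractional part of `x : ℚ_[p]`: a rational of the form
`k / p^n`, `0 ≤ k < p^n`, with `‖x - {x}_p‖ ≤ 1`. -/
def padicFract (x : ℚ_[p]) : ℚ :=
  let n : ℕ := (-x.valuation).toNat
  (PadicInt.appr ⟨(p : ℚ_[p]) ^ n * x, by
      rcases eq_or_ne x 0 with h | h
      · simp [h]
      · rw [norm_mul, Padic.norm_p_pow, Padic.norm_eq_zpow_neg_valuation h]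
        rw [← Real.rpow_intCast, ← Real.rpow_intCast, ← Real.rpow_add
          (by exact_mod_cast (Fact.out : p.Prime).pos)]
        refine Real.rpow_le_one_of_one_le_of_nonpos
          (by exact_mod_cast (Fact.out : p.Prime).one_lt.le) ?_
        have h2 := Int.self_le_toNat (-x.valuation)
        push_cast
        exact_mod_cast (by omega :
          -(((-x.valuation).toNat : ℤ) : ℤ) + -x.valuation ≤ 0)⟩ n : ℚ)
    / (p : ℚ) ^ n

/-- The canonical additive character `χ(x) = exp(2πi {x}_p)` of `ℚ_[p]`. -/
def padicChar (x : ℚ_[p]) : ℂ :=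
  Complex.exp (2 * Real.pi * Complex.I * (padicFract x : ℂ))

/-- The characteristic function of a measure on `ℚ_[p]`. -/
def padicCharFun (μ : Measure ℚ_[p]) (t : ℚ_[p]) : ℂ :=
  ∫ x, padicChar (t * x) ∂μ

/-- The Haar measure on `ℚ_[p]` normalized so that the unit ball has measure 1. -/
def padicHaar : Measure ℚ_[p] :=
  Measure.addHaarMeasure
    ⟨⟨closedBall 0 1, isCompact_closedBall 0 1⟩, by
      refine ⟨0, ?_⟩
      rw [(IsUltrametricDist.isOpen_closedBall (0 : ℚ_[p]) one_ne_zero).interior_eq]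
      exact mem_closedBall_self zero_le_one⟩

lemma padicFract_form (x : ℚ_[p]) : ∃ n k : ℕ, k < p ^ n ∧ padicFract x = (k : ℚ) / (p : ℚ) ^ n := by
  unfold padicFract
  exact ⟨_, _, PadicInt.appr_lt _ _, rfl⟩

lemma digitsum (p k : ℕ) (n : ℕ) :
    ∑ j ∈ Finset.range n, (k / p ^ j % p) * p ^ j = k % p ^ n := by
  induction n with
  | zero => simp [Nat.mod_one]
  | succ n ih => rw [Finset.sum_range_succ, ih, Nat.mod_pow_succ]; ring

/-- If `∫ exp(2πi({t₀ x}_p - r)) dμ(x) = 1` with `0 ≤ r < 1`, then `r = 0` or `r` is a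
rational of the form `p^{-n}(a₀ + a₁ p + ⋯ + a_{n-1} p^{n-1})` with `a₀ ≠ 0`; in either
case `r = {t₀ ξ}_p` for some `ξ ∈ ℚ_[p]`. -/
theorem stmt_3 {p : ℕ} [Fact p.Prime] (μ : Measure ℚ_[p]) [IsProbabilityMeasure μ]
    (t₀ : ℚ_[p]) (r : ℝ) (hr0 : 0 ≤ r) (hr1 : r < 1)
    (h : ∫ x, Complex.exp (2 * Real.pi * Complex.I *
        (((padicFract (t₀ * x) : ℝ) : ℂ) - (r : ℂ))) ∂μ = 1) :
    (r = 0 ∨ ∃ (n : ℕ) (a : ℕ → ℕ), 1 ≤ n ∧ (∀ j < n, a j < p) ∧ a 0 ≠ 0 ∧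
        r = (∑ j ∈ Finset.range n, (a j : ℝ) * (p : ℝ) ^ j) / (p : ℝ) ^ n) ∧
      ∃ ξ : ℚ_[p], r = (padicFract (t₀ * ξ) : ℝ) := by
  have hp1 : 1 < p := (Fact.out : p.Prime).one_lt
  set g : ℚ_[p] → ℂ := fun x => Complex.exp (2 * Real.pi * Complex.I *
        (((padicFract (t₀ * x) : ℝ) : ℂ) - (r : ℂ))) with hgdef
  -- each value of g has norm 1
  have hkey : ∀ x : ℚ_[p], 2 * Real.pi * Complex.I *
      (((padicFract (t₀ * x) : ℝ) : ℂ) - (r : ℂ))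
      = ((2 * Real.pi * ((padicFract (t₀ * x) : ℝ) - r) : ℝ) : ℂ) * Complex.I := by
    intro x; push_cast; ring
  have habs : ∀ x : ℚ_[p], ‖g x‖ = 1 := by
    intro x
    rw [hgdef]; simp only []
    rw [hkey x, Complex.norm_exp_ofReal_mul_I]
  -- g is integrable
  have hint : Integrable g μ := by
    by_contra hc
    rw [integral_undef hc] at h
    exact one_ne_zero h.symm
  -- the real part integrates to 1
  have hre : ∫ x, (g x).re ∂μ = 1 := by
    have := integral_re (𝕜 := ℂ) hint
    rw [RCLike.re_eq_complex_re] at this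
    rw [this, h]; simp
  have hintre : Integrable (fun x => (g x).re) μ := hint.re
  have h0 : ∫ x, (1 - (g x).re) ∂μ = 0 := by
    rw [integral_sub (integrable_const 1) hintre]
    simp only [integral_const, measure_univ]
    rw [hre]; simp
  have hnonneg : 0 ≤ fun x => 1 - (g x).re := by
    intro x
    have := Complex.re_le_norm (g x)
    rw [habs x] at this
    simpa using this
  have hae : (fun x => 1 - (g x).re) =ᵐ[μ] 0 :=
    (integral_eq_zero_iff_of_nonneg hnonneg ((integrable_const 1).sub hintre)).mp h0
  obtain ⟨x, hx⟩ := hae.exists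
  have hrex : (g x).re = 1 := by
    have := hx
    simp only [Pi.zero_apply] at this
    linarith
  have hgx : g x = 1 := by
    have hsq := Complex.sq_norm (g x)
    rw [habs x, Complex.normSq_apply, hrex] at hsq
    have him : (g x).im = 0 := by nlinarith [sq_nonneg (g x).im]
    exact Complex.ext (by simp [hrex]) (by simp [him])
  -- deduce r = padicFract (t₀ * x)
  have hexp : Complex.exp (2 * Real.pi * Complex.I *
      (((padicFract (t₀ * x) : ℝ) : ℂ) - (r : ℂ))) = 1 := hgx
  obtain ⟨m, hm⟩ := Complex.exp_eq_one_iff.mp hexp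
  have hπI : (2 * (Real.pi : ℂ) * Complex.I) ≠ 0 := by
    simp [Real.pi_ne_zero, Complex.I_ne_zero]
  have hz : (((padicFract (t₀ * x) : ℝ) : ℂ) - (r : ℂ)) = (m : ℂ) := by
    apply mul_left_cancel₀ hπI
    rw [mul_comm ((m : ℂ)) _] at hm
    exact hm
  have hzr : ((padicFract (t₀ * x) : ℝ)) - r = (m : ℝ) := by
    have := congrArg Complex.re hz
    simpa using this
  -- bounds on padicFract
  obtain ⟨n, k, hkn, hq⟩ := padicFract_form (t₀ * x)
  have hpn : (0 : ℝ) < (p : ℝ) ^ n := by positivity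
  have hfr : ((padicFract (t₀ * x) : ℝ)) = (k : ℝ) / (p : ℝ) ^ n := by
    rw [hq]; push_cast; ring
  have hf0 : 0 ≤ ((padicFract (t₀ * x) : ℝ)) := by
    rw [hfr]; positivity
  have hf1 : ((padicFract (t₀ * x) : ℝ)) < 1 := by
    rw [hfr, div_lt_one hpn]
    exact_mod_cast hkn
  have hm0 : m = 0 := by
    have h1 : (m : ℝ) < 1 := by rw [← hzr]; linarith
    have h2 : (-1 : ℝ) < (m : ℝ) := by rw [← hzr]; linarith
    have h1' : m < 1 := by exact_mod_cast h1
    have h2' : (-1 : ℤ) < m := by exact_mod_cast h2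
    omega
  have hr : r = ((padicFract (t₀ * x) : ℝ)) := by
    rw [hm0] at hzr; push_cast at hzr; linarith
  refine ⟨?_, x, hr⟩
  -- first conjunct
  rcases Nat.eq_zero_or_pos k with hk0 | hkpos
  · left; rw [hr, hfr, hk0]; simp
  · right
    have hkne : k ≠ 0 := hkpos.ne'
    set v := k.factorization p with hv
    set k' := k / p ^ v with hk'
    have hdvd : p ^ v * k' = k := Nat.ordProj_mul_ordCompl_eq_self k p
    have hndvd : ¬ p ∣ k' := Nat.not_dvd_ordCompl (Fact.out : p.Prime) hkne
    have hvle : p ^ v ≤ k := Nat.ordProj_le p hkne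
    have hvn : v < n := by
      have : p ^ v < p ^ n := lt_of_le_of_lt hvle hkn
      exact (pow_lt_pow_iff_right₀ hp1).mp this
    set n' := n - v with hn'
    have hnn : n = v + n' := by omega
    have hk'pos : 0 < k' := by
      rcases Nat.eq_zero_or_pos k' with h0 | h0
      · rw [h0, mul_zero] at hdvd; omega
      · exact h0
    have hk'lt : k' < p ^ n' := by
      have hppos : 0 < p ^ v := Nat.pow_pos (n := v) (by omega)
      have : p ^ v * k' < p ^ v * p ^ n' := by
        rw [hdvd, ← pow_add, ← hnn]; exact hkn
      exact Nat.lt_of_mul_lt_mul_left this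
    refine ⟨n', fun j => k' / p ^ j % p, by omega, fun j _ => Nat.mod_lt _ (by omega), ?_, ?_⟩
    · simp only [pow_zero, Nat.div_one]
      intro hc
      exact hndvd (Nat.dvd_of_mod_eq_zero hc)
    · have hsum : ∑ j ∈ Finset.range n', (k' / p ^ j % p) * p ^ j = k' := by
        rw [digitsum, Nat.mod_eq_of_lt hk'lt]
      have hsumR : ∑ j ∈ Finset.range n', ((k' / p ^ j % p : ℕ) : ℝ) * (p : ℝ) ^ j = (k' : ℝ) := by
        exact_mod_cast congrArg (Nat.cast : ℕ → ℝ) hsum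
      rw [hsumR, hr, hfr]
      have hkR : (k : ℝ) = (p : ℝ) ^ v * (k' : ℝ) := by exact_mod_cast hdvd.symm
      have hpnR : (p : ℝ) ^ n = (p : ℝ) ^ v * (p : ℝ) ^ n' := by
        rw [← pow_add, ← hnn]
      rw [hkR, hpnR, mul_div_mul_left]
      positivity

end
end

section
/- Let g : Q_p → ℂ be continuous with g(0) = 1, and suppose there are γ₀ ∈ Q_p with 0 < |γ₀|_p ≤ p^{-1} and β ∈ (0,1] such that |g(γ₀ t)| = |g(t)|^β for all t ∈ Q_p. Then g(t) ≠ 0 for every t ∈ Q_p. -/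
open MeasureTheory Metric Filter Topology
open scoped ENNReal NNReal

noncomputable section

variable {p : ℕ} [Fact p.Prime]

/-- Corollary 1: if `g` is continuous with `g(0) = 1` and `|g(γ₀ t)| = |g(t)|^β` with
`0 < |γ₀|_p ≤ p⁻¹` and `0 < β ≤ 1`, then `g` never vanishes. -/
theorem stmt_6 {p : ℕ} [Fact p.Prime] (g : ℚ_[p] → ℂ) (hg : Continuous g)
    (hg0 : g 0 = 1) (γ₀ : ℚ_[p]) (hγ0 : γ₀ ≠ 0) (hγ : ‖γ₀‖ ≤ (p : ℝ)⁻¹)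
    (β : ℝ) (hβ0 : 0 < β) (hβ1 : β ≤ 1)
    (h : ∀ t : ℚ_[p], ‖g (γ₀ * t)‖ = ‖g t‖ ^ β) :
    ∀ t : ℚ_[p], g t ≠ 0 := by
  intro t₀ ht₀
  -- By induction, g vanishes at γ₀^n * t₀ for all n
  have hzero : ∀ n : ℕ, g (γ₀ ^ n * t₀) = 0 := by
    intro n
    induction n with
    | zero => simpa using ht₀
    | succ n ih =>
      have := h (γ₀ ^ n * t₀)
      rw [ih] at this
      have h0 : ‖g (γ₀ * (γ₀ ^ n * t₀))‖ = 0 := by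
        rw [this]; simp [Real.zero_rpow hβ0.ne']
      have : g (γ₀ * (γ₀ ^ n * t₀)) = 0 := by
        simpa using norm_eq_zero.mp h0
      rw [pow_succ]
      rw [show γ₀ ^ n * γ₀ * t₀ = γ₀ * (γ₀ ^ n * t₀) by ring]
      exact this
  -- γ₀^n * t₀ → 0
  have hlt : ‖γ₀‖ < 1 := by
    have hp1 : (1 : ℝ) < p := by exact_mod_cast (Fact.out : p.Prime).one_lt
    exact lt_of_le_of_lt hγ (by rw [inv_lt_one_iff₀]; right; exact hp1)
  have htend : Tendsto (fun n : ℕ => γ₀ ^ n * t₀) atTop (𝓝 0) := by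
    have h1 : Tendsto (fun n : ℕ => γ₀ ^ n) atTop (𝓝 0) :=
      tendsto_pow_atTop_nhds_zero_of_norm_lt_one hlt
    simpa using h1.mul_const t₀
  have : Tendsto (fun n : ℕ => g (γ₀ ^ n * t₀)) atTop (𝓝 (g 0)) :=
    (hg.tendsto 0).comp htend
  rw [hg0] at this
  have : Tendsto (fun _ : ℕ => (0 : ℂ)) atTop (𝓝 1) := by
    simpa [hzero] using this
  exact (zero_ne_one (α := ℂ)) (tendsto_nhds_unique this tendsto_const_nhds).symm

end
end

section
/- Let Φ be a Borel measure on Q_p \ {0}, finite outside every neighbourhood of zero, satisfying Φ(M) = β Φ(γ₀ M) for every compact open M ⊂ Q_p \ {0}, with 0 < β < 1 and γ₀ ∈ Q_p, 0 < |γ₀|_p ≤ p^{-1}. Let g(t) = exp(∫_{Q_p \ {0}} (χ(ty) - 1) Φ(dy)) be the characteristic function of a distribution G, and let X₁, X₂, … be i.i.d. with distribution G. Then with B_n = γ₀^{-n} and k(n) = ⌊β^{-n}⌋, the characteristic functions of S_n = B_n^{-1}(X₁ + ⋯ + X_{k(n)}), namely g(γ₀^n t)^{⌊β^{-n}⌋}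 = exp(β^n ⌊β^{-n}⌋ ∫ (χ(ty)-1) Φ(dy)), converge to g(t) uniformly on compact subsets of Q_p as n → ∞. -/
open MeasureTheory Metric Filter Topology
open scoped ENNReal NNReal

noncomputable section

variable {p : ℕ} [Fact p.Prime]

lemma padicFract_def (x : ℚ_[p]) (n : ℕ) (hn : n = (-x.valuation).toNat)
    (h : ‖(p : ℚ_[p]) ^ n * x‖ ≤ 1) :
    padicFract x = (PadicInt.appr ⟨(p : ℚ_[p]) ^ n * x, h⟩ n : ℚ) / (p : ℚ) ^ n := by
  subst hn; rfl

lemma padicFract_zero_of_norm_le_one {x : ℚ_[p]} (hx : ‖x‖ ≤ 1) : padicFract x = 0 := by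
  have hv : (-x.valuation).toNat = 0 :=
    Int.toNat_eq_zero.2 (by simpa using (Padic.norm_le_one_iff_val_nonneg x).1 hx)
  have h' : ‖(p : ℚ_[p]) ^ (0 : ℕ) * x‖ ≤ 1 := by simpa using hx
  rw [padicFract_def x 0 hv.symm h']
  have h0 : PadicInt.appr (⟨(p : ℚ_[p]) ^ (0 : ℕ) * x, h'⟩ : ℤ_[p]) 0 = 0 :=
    Nat.lt_one_iff.1 (by simpa using PadicInt.appr_lt (⟨(p : ℚ_[p]) ^ (0 : ℕ) * x, h'⟩ : ℤ_[p]) 0)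
  rw [h0]; simp

lemma appr_eq_appr (z z' : ℤ_[p]) (n : ℕ) (h : z' - z ∈ Ideal.span {(p : ℤ_[p]) ^ n}) :
    z'.appr n = z.appr n := by
  have h1 := PadicInt.appr_spec n z
  have h2 := PadicInt.appr_spec n z'
  have h3 : ((z'.appr n : ℤ_[p]) - (z.appr n : ℤ_[p])) ∈ Ideal.span {(p : ℤ_[p]) ^ n} := by
    have e : ((z'.appr n : ℤ_[p]) - (z.appr n : ℤ_[p]))
        = (z - z.appr n) - (z' - z'.appr n) + (z' - z) := by ring
    rw [e]; exact Ideal.add_mem _ (Ideal.sub_mem _ h1 h2) h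
  have h4 : ‖(((z'.appr n : ℤ) - (z.appr n : ℤ) : ℤ) : ℤ_[p])‖ ≤ (p : ℝ) ^ (-(n : ℤ)) := by
    rw [PadicInt.norm_le_pow_iff_mem_span_pow]
    push_cast
    exact h3
  have h5 : ((p : ℤ) ^ n) ∣ ((z'.appr n : ℤ) - (z.appr n : ℤ)) :=
    PadicInt.norm_int_le_pow_iff_dvd.1 h4
  have h6 := PadicInt.appr_lt z n
  have h7 := PadicInt.appr_lt z' n
  have h8 : ((z'.appr n : ℤ) - (z.appr n : ℤ)) = 0 := by
    refine Int.eq_zero_of_dvd_of_natAbs_lt_natAbs h5 ?_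
    have : ((p : ℤ) ^ n).natAbs = p ^ n := by
      rw [Int.natAbs_pow, Int.natAbs_natCast]
    rw [this]
    omega
  omega

lemma padicFract_add_eq {x u : ℚ_[p]} (hu : ‖u‖ ≤ 1) :
    padicFract (x + u) = padicFract x := by
  rcases le_or_gt ‖x‖ 1 with hx | hx
  · rw [padicFract_zero_of_norm_le_one hx,
      padicFract_zero_of_norm_le_one ((Padic.nonarchimedean x u).trans (max_le hx hu))]
  · -- ‖x‖ > 1
    have hx0 : x ≠ 0 := by rintro rfl; simp at hx; linarith
    have hnorm : ‖x + u‖ = ‖x‖ := by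
      rcases eq_or_ne u 0 with rfl | hu0
      · simp
      · rw [add_comm, Padic.add_eq_max_of_ne (by
          intro h; rw [h] at hu; linarith)]
        exact max_eq_right (hu.trans hx.le)
    have hxu0 : x + u ≠ 0 := by
      intro h; rw [h] at hnorm; simp at hnorm; rw [← hnorm] at hx; linarith
    have hval : (x + u).valuation = x.valuation := by
      have e1 := Padic.norm_eq_zpow_neg_valuation hxu0
      have e2 := Padic.norm_eq_zpow_neg_valuation hx0
      rw [e1, e2] at hnorm
      have hp1 : (1 : ℝ) < (p : ℝ) := by exact_mod_cast (Fact.out : p.Prime).one_lt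
      have := zpow_right_injective₀ (by positivity) (ne_of_gt hp1) hnorm
      omega
    set n : ℕ := (-x.valuation).toNat with hn
    have hn' : n = (-(x + u).valuation).toNat := by rw [hval]
    -- the two elements of ℤ_[p]
    have hz : ‖(p : ℚ_[p]) ^ n * x‖ ≤ 1 := by
      rw [norm_mul, Padic.norm_p_pow, Padic.norm_eq_zpow_neg_valuation hx0,
        ← zpow_add₀ (by exact_mod_cast (Fact.out : p.Prime).ne_zero : (p : ℝ) ≠ 0)]
      refine zpow_le_one_of_nonpos₀ (by exact_mod_cast (Fact.out : p.Prime).one_lt.le) ?_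
      have h2 := Int.self_le_toNat (-x.valuation)
      omega
    have hz' : ‖(p : ℚ_[p]) ^ n * (x + u)‖ ≤ 1 := by
      rw [norm_mul, hnorm, ← norm_mul]; exact hz
    rw [padicFract_def x n hn hz, padicFract_def (x + u) n hn' hz']
    congr 2
    have hw : ‖(p : ℚ_[p]) ^ n * u‖ ≤ 1 := by
      rw [norm_mul, Padic.norm_p_pow]
      calc (p : ℝ) ^ (-(n : ℤ)) * ‖u‖ ≤ (p : ℝ) ^ (-(n : ℤ)) * 1 :=
            mul_le_mul_of_nonneg_left hu (by positivity)
        _ ≤ 1 := by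
            rw [mul_one]
            exact zpow_le_one_of_nonpos₀
              (by exact_mod_cast (Fact.out : p.Prime).one_lt.le) (by omega)
    refine appr_eq_appr _ _ n ?_
    rw [← PadicInt.norm_le_pow_iff_mem_span_pow]
    have e : (⟨(p : ℚ_[p]) ^ n * (x + u), hz'⟩ - ⟨(p : ℚ_[p]) ^ n * x, hz⟩ : ℤ_[p])
        = ⟨(p : ℚ_[p]) ^ n * u, hw⟩ :=
      Subtype.ext (by show (p : ℚ_[p]) ^ n * (x + u) - (p : ℚ_[p]) ^ n * x = (p : ℚ_[p]) ^ n * u; ring)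
    rw [e]
    show ‖(p : ℚ_[p]) ^ n * u‖ ≤ _
    rw [norm_mul, Padic.norm_p_pow]
    calc (p : ℝ) ^ (-(n : ℤ)) * ‖u‖ ≤ (p : ℝ) ^ (-(n : ℤ)) * 1 :=
          mul_le_mul_of_nonneg_left hu (by positivity)
      _ = (p : ℝ) ^ (-(n : ℤ)) := mul_one _

lemma padicChar_eq_one {x : ℚ_[p]} (hx : ‖x‖ ≤ 1) : padicChar x = 1 := by
  rw [padicChar, padicFract_zero_of_norm_le_one hx]
  simp

lemma norm_padicChar (x : ℚ_[p]) : ‖padicChar x‖ = 1 := by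
  rw [padicChar, Complex.norm_exp]
  have : (2 * ↑Real.pi * Complex.I * ((padicFract x : ℚ) : ℂ)).re = 0 := by
    simp [Complex.mul_re, Complex.mul_im]
  rw [this, Real.exp_zero]

lemma continuous_padicChar : Continuous (padicChar (p := p)) := by
  rw [continuous_iff_continuousAt]
  intro x
  have h : padicChar =ᶠ[𝓝 x] (fun _ => padicChar x) := by
    filter_upwards [Metric.closedBall_mem_nhds x one_pos] with y hy
    have : y = x + (y - x) := by ring
    rw [this, padicChar, padicFract_add_eq (by
      simpa [dist_eq_norm] using hy : ‖y - x‖ ≤ 1), ← padicChar]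
  exact continuousAt_const.congr h.symm

lemma norm_padicChar_sub_one_le (x : ℚ_[p]) : ‖padicChar x - 1‖ ≤ 2 := by
  calc ‖padicChar x - 1‖ ≤ ‖padicChar x‖ + ‖(1 : ℂ)‖ := norm_sub_le _ _
    _ = 2 := by rw [norm_padicChar]; norm_num

lemma borel_eq_compactOpen :
    (inferInstance : MeasurableSpace ℚ_[p]) =
      MeasurableSpace.generateFrom {M : Set ℚ_[p] | IsCompact M ∧ IsOpen M} := by
  have hb : TopologicalSpace.IsTopologicalBasis {M : Set ℚ_[p] | IsCompact M ∧ IsOpen M} := by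
    refine TopologicalSpace.isTopologicalBasis_of_isOpen_of_nhds (fun u hu => hu.2) ?_
    intro a u ha hu
    obtain ⟨ε, hε, hb⟩ := Metric.isOpen_iff.1 hu a ha
    refine ⟨ball a ε, ⟨?_, isOpen_ball⟩, mem_ball_self hε, hb⟩
    exact Metric.isCompact_of_isClosed_isBounded
      (IsUltrametricDist.isClosed_ball a ε) isBounded_ball
  rw [BorelSpace.measurable_eq (α := ℚ_[p]), hb.borel_eq_generateFrom]

lemma isPiSystem_compactOpen :
    IsPiSystem {M : Set ℚ_[p] | IsCompact M ∧ IsOpen M} :=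
  fun _ hs _ ht _ => ⟨hs.1.inter ht.1, hs.2.inter ht.2⟩

lemma restrict_scaling (Φ : Measure ℚ_[p])
    (hΦfin : ∀ U ∈ 𝓝 (0 : ℚ_[p]), Φ Uᶜ < ⊤)
    (β : ℝ) (γ₀ : ℚ_[p]) (hγ0 : γ₀ ≠ 0)
    (hscale : ∀ M : Set ℚ_[p], IsCompact M → IsOpen M → 0 ∉ M →
      Φ M = ENNReal.ofReal β * Φ ((fun x => γ₀ * x) '' M))
    {r : ℝ} (hr : 0 < r) :
    Φ.restrict ((closedBall 0 r)ᶜ) =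
      (ENNReal.ofReal β • Φ.map (fun y => γ₀⁻¹ * y)).restrict ((closedBall 0 r)ᶜ) := by
  set S := (closedBall (0 : ℚ_[p]) r)ᶜ with hS
  have hSclosed : IsClosed S := (IsUltrametricDist.isOpen_closedBall (0 : ℚ_[p]) hr.ne').isClosed_compl
  have hSmeas : MeasurableSet S := measurableSet_closedBall.compl
  have hΦS : Φ S < ⊤ := hΦfin _ (Metric.closedBall_mem_nhds 0 hr)
  have himg : ∀ A : Set ℚ_[p], (fun x => γ₀ * x) '' A = (fun y => γ₀⁻¹ * y) ⁻¹' A := by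
    intro A; ext z
    simp only [Set.mem_image, Set.mem_preimage]
    constructor
    · rintro ⟨a, ha, rfl⟩; rwa [inv_mul_cancel_left₀ hγ0]
    · intro h; exact ⟨γ₀⁻¹ * z, h, by rw [mul_inv_cancel_left₀ hγ0]⟩
  refine Measure.ext_of_generateFrom_of_iUnion {M : Set ℚ_[p] | IsCompact M ∧ IsOpen M}
    (fun n => closedBall 0 (n + 1)) borel_eq_compactOpen isPiSystem_compactOpen ?_ ?_ ?_ ?_
  · ext x
    simp only [Set.mem_iUnion, Set.mem_univ, iff_true, mem_closedBall, dist_zero_right]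
    obtain ⟨n, hn⟩ := exists_nat_ge ‖x‖
    exact ⟨n, hn.trans (by norm_num)⟩
  · intro n
    exact ⟨isCompact_closedBall _ _,
      IsUltrametricDist.isOpen_closedBall _ (by positivity)⟩
  · intro n
    rw [Measure.restrict_apply measurableSet_closedBall]
    exact ((measure_mono Set.inter_subset_right).trans_lt hΦS).ne
  · intro M hM
    have hMS : IsCompact (M ∩ S) := hM.1.inter_right hSclosed
    have hMSopen : IsOpen (M ∩ S) := hM.2.inter Metric.isClosed_closedBall.isOpen_compl
    have hM0 : (0 : ℚ_[p]) ∉ M ∩ S := fun h => h.2 (mem_closedBall_self hr.le)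
    rw [Measure.restrict_apply hM.2.measurableSet, Measure.restrict_apply hM.2.measurableSet,
      Measure.smul_apply, Measure.map_apply (measurable_const_mul γ₀⁻¹)
        (hM.2.measurableSet.inter hSmeas), ← himg, smul_eq_mul]
    exact hscale _ hMS hMSopen hM0

lemma integral_scaling_aux (Φ : Measure ℚ_[p])
    (hΦfin : ∀ U ∈ 𝓝 (0 : ℚ_[p]), Φ Uᶜ < ⊤)
    (β : ℝ) (hβ0 : 0 < β) (γ₀ : ℚ_[p]) (hγ0 : γ₀ ≠ 0)
    (hscale : ∀ M : Set ℚ_[p], IsCompact M → IsOpen M → 0 ∉ M →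
      Φ M = ENNReal.ofReal β * Φ ((fun x => γ₀ * x) '' M))
    {t : ℚ_[p]} (ht : t ≠ 0) :
    ∫ y, (padicChar (t * y) - 1) ∂Φ
      = (β : ℂ) * ∫ y, (padicChar (γ₀⁻¹ * t * y) - 1) ∂Φ := by
  set r := ‖t‖⁻¹ with hrdef
  have hr : 0 < r := inv_pos.2 (norm_pos_iff.2 ht)
  set S := (closedBall (0 : ℚ_[p]) r)ᶜ with hS
  set f : ℚ_[p] → ℂ := fun y => padicChar (t * y) - 1 with hf
  have hf0 : ∀ y, y ∉ S → f y = 0 := by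
    intro y hy
    have hy' : ‖y‖ ≤ r := by
      have : y ∈ closedBall (0 : ℚ_[p]) r := not_not.1 hy
      simpa [dist_eq_norm] using this
    have h1 : ‖t * y‖ ≤ 1 := by
      rw [norm_mul]
      calc ‖t‖ * ‖y‖ ≤ ‖t‖ * r := by gcongr
        _ = 1 := mul_inv_cancel₀ (norm_ne_zero_iff.2 ht)
    simp [hf, padicChar_eq_one h1]
  have hfc : Continuous f :=
    (continuous_padicChar.comp (continuous_const.mul continuous_id)).sub continuous_const
  have hrestr := restrict_scaling Φ hΦfin β γ₀ hγ0 hscale hr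
  have hmeas : AEMeasurable (fun y : ℚ_[p] => γ₀⁻¹ * y) Φ :=
    (measurable_const_mul γ₀⁻¹).aemeasurable
  calc ∫ y, f y ∂Φ = ∫ y in S, f y ∂Φ :=
        (setIntegral_eq_integral_of_forall_compl_eq_zero hf0).symm
    _ = ∫ y in S, f y ∂(ENNReal.ofReal β • Φ.map (fun y => γ₀⁻¹ * y)) := by rw [hrestr]
    _ = β * ∫ y in S, f y ∂(Φ.map (fun y => γ₀⁻¹ * y)) := by
        rw [Measure.restrict_smul, integral_smul_measure, ENNReal.toReal_ofReal hβ0.le,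
          Complex.real_smul]
    _ = β * ∫ y, f y ∂(Φ.map (fun y => γ₀⁻¹ * y)) := by
        rw [setIntegral_eq_integral_of_forall_compl_eq_zero hf0]
    _ = β * ∫ y, f (γ₀⁻¹ * y) ∂Φ := by
        rw [integral_map hmeas hfc.aestronglyMeasurable]
    _ = (β : ℂ) * ∫ y, (padicChar (γ₀⁻¹ * t * y) - 1) ∂Φ := by
        norm_cast
        congr 1
        refine integral_congr_ae (Eventually.of_forall fun y => ?_)
        simp only [hf]
        rw [mul_left_comm, ← mul_assoc]

lemma integral_scaling (Φ : Measure ℚ_[p])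
    (hΦfin : ∀ U ∈ 𝓝 (0 : ℚ_[p]), Φ Uᶜ < ⊤)
    (β : ℝ) (hβ0 : 0 < β) (γ₀ : ℚ_[p]) (hγ0 : γ₀ ≠ 0)
    (hscale : ∀ M : Set ℚ_[p], IsCompact M → IsOpen M → 0 ∉ M →
      Φ M = ENNReal.ofReal β * Φ ((fun x => γ₀ * x) '' M))
    (t : ℚ_[p]) :
    ∫ y, (padicChar (γ₀ * t * y) - 1) ∂Φ
      = (β : ℂ) * ∫ y, (padicChar (t * y) - 1) ∂Φ := by
  rcases eq_or_ne t 0 with rfl | ht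
  · simp [padicChar_eq_one (by simp : ‖(0 : ℚ_[p])‖ ≤ 1)]
  · have h := integral_scaling_aux Φ hΦfin β hβ0 γ₀ hγ0 hscale (mul_ne_zero hγ0 ht)
    rw [h]
    congr 1
    refine integral_congr_ae (Eventually.of_forall fun y => ?_)
    rw [inv_mul_cancel_left₀ hγ0]

lemma integral_scaling_pow (Φ : Measure ℚ_[p])
    (hΦfin : ∀ U ∈ 𝓝 (0 : ℚ_[p]), Φ Uᶜ < ⊤)
    (β : ℝ) (hβ0 : 0 < β) (γ₀ : ℚ_[p]) (hγ0 : γ₀ ≠ 0)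
    (hscale : ∀ M : Set ℚ_[p], IsCompact M → IsOpen M → 0 ∉ M →
      Φ M = ENNReal.ofReal β * Φ ((fun x => γ₀ * x) '' M))
    (n : ℕ) (t : ℚ_[p]) :
    ∫ y, (padicChar (γ₀ ^ n * t * y) - 1) ∂Φ
      = ((β ^ n : ℝ) : ℂ) * ∫ y, (padicChar (t * y) - 1) ∂Φ := by
  induction n with
  | zero => simp
  | succ n ih =>
    have e : γ₀ ^ (n + 1) * t = γ₀ * (γ₀ ^ n * t) := by ring
    rw [e, integral_scaling Φ hΦfin β hβ0 γ₀ hγ0 hscale, ih]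
    push_cast
    ring

lemma integral_bound (Φ : Measure ℚ_[p])
    (hΦfin : ∀ U ∈ 𝓝 (0 : ℚ_[p]), Φ Uᶜ < ⊤)
    {R : ℝ} (hR : 0 < R) {t : ℚ_[p]} (ht : ‖t‖ ≤ R) :
    ‖∫ y, (padicChar (t * y) - 1) ∂Φ‖
      ≤ 2 * (Φ ((closedBall 0 R⁻¹)ᶜ)).toReal := by
  set S := (closedBall (0 : ℚ_[p]) R⁻¹)ᶜ with hSdef
  have hf0 : ∀ y, y ∉ S → padicChar (t * y) - 1 = 0 := by
    intro y hy
    have hy' : ‖y‖ ≤ R⁻¹ := by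
      have : y ∈ closedBall (0 : ℚ_[p]) R⁻¹ := not_not.1 hy
      simpa [dist_eq_norm] using this
    have h1 : ‖t * y‖ ≤ 1 := by
      rw [norm_mul]
      calc ‖t‖ * ‖y‖ ≤ R * R⁻¹ :=
            mul_le_mul ht hy' (norm_nonneg _) hR.le
        _ = 1 := mul_inv_cancel₀ hR.ne'
    rw [padicChar_eq_one h1, sub_self]
  have hfin : Φ S < ⊤ := hΦfin _ (Metric.closedBall_mem_nhds 0 (inv_pos.2 hR))
  rw [← setIntegral_eq_integral_of_forall_compl_eq_zero hf0]
  exact norm_setIntegral_le_of_norm_le_const hfin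
    (fun y _ => norm_padicChar_sub_one_le _)

/-- Theorem 1(i): if `Φ` satisfies `Φ(M) = β Φ(γ₀ M)` and `g` is the characteristic
function `exp ∫ (χ(ty)-1) dΦ(y)` of a distribution `G`, then with `Bₙ = γ₀^{-n}`,
`k(n) = ⌊β^{-n}⌋` the characteristic functions `g(γ₀ⁿ t)^{⌊β^{-n}⌋}` of the normalized
sums converge to `g` uniformly on compact sets. -/
theorem stmt_9 {p : ℕ} [Fact p.Prime] (Φ : Measure ℚ_[p]) (hΦ0 : Φ {0} = 0)
    (hΦfin : ∀ U ∈ 𝓝 (0 : ℚ_[p]), Φ Uᶜ < ⊤)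
    (β : ℝ) (hβ0 : 0 < β) (hβ1 : β < 1)
    (γ₀ : ℚ_[p]) (hγ0 : γ₀ ≠ 0) (hγ : ‖γ₀‖ ≤ (p : ℝ)⁻¹)
    (hscale : ∀ M : Set ℚ_[p], IsCompact M → IsOpen M → 0 ∉ M →
      Φ M = ENNReal.ofReal β * Φ ((fun x => γ₀ * x) '' M))
    (G : Measure ℚ_[p]) [IsProbabilityMeasure G]
    (hG : ∀ t : ℚ_[p], padicCharFun G t =
      Complex.exp (∫ y, (padicChar (t * y) - 1) ∂Φ)) :
    ∀ K : Set ℚ_[p], IsCompact K →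
      TendstoUniformlyOn
        (fun n t => (padicCharFun G (γ₀ ^ n * t)) ^ (⌊(β ^ n)⁻¹⌋₊))
        (padicCharFun G) atTop K := by
  intro K hK
  obtain ⟨R₀, hR₀⟩ := hK.isBounded.subset_closedBall 0
  set R : ℝ := max R₀ 1 with hRdef
  have hRpos : 0 < R := lt_of_lt_of_le one_pos (le_max_right _ _)
  set C : ℝ := 2 * (Φ ((closedBall (0 : ℚ_[p]) R⁻¹)ᶜ)).toReal with hCdef
  have hC0 : 0 ≤ C := by positivity
  set I : ℚ_[p] → ℂ := fun t => ∫ y, (padicChar (t * y) - 1) ∂Φ with hIdef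
  have hIbound : ∀ t ∈ K, ‖I t‖ ≤ C := by
    intro t htK
    refine integral_bound Φ hΦfin hRpos ?_
    have : t ∈ closedBall (0 : ℚ_[p]) R₀ := hR₀ htK
    simp only [mem_closedBall, dist_zero_right] at this
    exact this.trans (le_max_left _ _)
  rw [Metric.tendstoUniformlyOn_iff]
  intro ε hε
  have hβn : Tendsto (fun n : ℕ => β ^ n) atTop (𝓝 0) :=
    tendsto_pow_atTop_nhds_zero_of_lt_one hβ0.le hβ1
  have hBn : Tendsto (fun n : ℕ => Real.exp C * (2 * (β ^ n * C))) atTop (𝓝 0) := by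
    have := (((hβn.mul_const C).const_mul 2).const_mul (Real.exp C))
    simpa using this
  have hβnC : Tendsto (fun n : ℕ => β ^ n * C) atTop (𝓝 0) := by
    simpa using hβn.mul_const C
  filter_upwards [hBn.eventually_lt_const hε,
    hβnC.eventually_le_const one_pos] with n hn2 hn1
  intro t htK
  have hβpow : (0 : ℝ) < β ^ n := pow_pos hβ0 n
  have hkn : |(⌊(β ^ n)⁻¹⌋₊ : ℝ) * β ^ n - 1| ≤ β ^ n := by
    have h1 : (⌊(β ^ n)⁻¹⌋₊ : ℝ) ≤ (β ^ n)⁻¹ := Nat.floor_le (by positivity)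
    have h2 : (β ^ n)⁻¹ - 1 < (⌊(β ^ n)⁻¹⌋₊ : ℝ) := Nat.sub_one_lt_floor _
    have h3 : (β ^ n)⁻¹ * β ^ n = 1 := inv_mul_cancel₀ hβpow.ne'
    rw [abs_le]
    constructor
    · nlinarith
    · nlinarith
  set c : ℝ := (⌊(β ^ n)⁻¹⌋₊ : ℝ) * β ^ n with hcdef
  set a : ℂ := I t with hadef
  have ha : ‖a‖ ≤ C := hIbound t htK
  have hF : (padicCharFun G (γ₀ ^ n * t)) ^ (⌊(β ^ n)⁻¹⌋₊) = Complex.exp ((c : ℂ) * a) := by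
    rw [hG (γ₀ ^ n * t),
      show (∫ y, (padicChar (γ₀ ^ n * t * y) - 1) ∂Φ) = ((β ^ n : ℝ) : ℂ) * a from
        integral_scaling_pow Φ hΦfin β hβ0 γ₀ hγ0 hscale n t,
      ← Complex.exp_nat_mul]
    congr 1
    rw [hcdef]
    push_cast
    ring
  rw [hG t, hF]
  have hia : (∫ y, (padicChar (t * y) - 1) ∂Φ) = a := rfl
  rw [hia, Complex.dist_eq]
  set w : ℂ := ((c - 1 : ℝ) : ℂ) * a with hwdef
  have hw : ‖w‖ ≤ β ^ n * C := by
    rw [hwdef, norm_mul, Complex.norm_real, Real.norm_eq_abs]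
    exact mul_le_mul hkn ha
      (norm_nonneg _) (pow_nonneg hβ0.le n)
  have hsplit : Complex.exp ((c : ℂ) * a) = Complex.exp a * Complex.exp w := by
    rw [← Complex.exp_add, hwdef]
    congr 1
    push_cast
    ring
  rw [hsplit, show Complex.exp a - Complex.exp a * Complex.exp w
      = Complex.exp a * (1 - Complex.exp w) by ring, norm_mul]
  have h1 : ‖Complex.exp a‖ ≤ Real.exp C := by
    rw [Complex.norm_exp]
    exact Real.exp_le_exp.2 ((Complex.re_le_norm a).trans ha)
  have h2 : ‖1 - Complex.exp w‖ ≤ 2 * (β ^ n * C) := by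
    rw [show (1 : ℂ) - Complex.exp w = -(Complex.exp w - 1) by ring, norm_neg]
    calc ‖Complex.exp w - 1‖ ≤ 2 * ‖w‖ :=
          Complex.norm_exp_sub_one_le (hw.trans hn1)
      _ ≤ 2 * (β ^ n * C) := by linarith
  calc ‖Complex.exp a‖ * ‖1 - Complex.exp w‖
      ≤ Real.exp C * (2 * (β ^ n * C)) :=
        mul_le_mul h1 h2 (norm_nonneg _) (Real.exp_nonneg _)
    _ < ε := hn2


end
end
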